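/- arXiv:1102.5375 — 7 statements merged into one kernel-verified Lean document; each statement's English description precedes it below -/
import Mathlib

section
/- Let (f_n)_{n≥0} be a sequence of real numbers with f_0 = 1, f_1 > 0, and f_{n+1} f_{n-1} ≥ f_n^2 for all n ≥ 1. Define (f̂_n)_{n≥1} by the recursion f_n = Σ_{k=1}^n f̂_k f_{n-k} for n ≥ 1 (i.e., the power series 1 - 1/f(z) where f(z) = Σ f_n z^n, as a formal power series identity). Then f̂_n ≥ 0 for all n ≥ 1. -/
/-- Kaluza's theorem: if `f 0 = 1`, `f 1 > 0` and the sequence `f` is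
log-convex, then the coefficients `fhat` of `1 - 1/f(z)`, determined by
`f n = ∑_{k=1}^n fhat k * f (n-k)` for `n ≥ 1`, are all non-negative. -/
theorem kaluza_nonneg (f fhat : ℕ → ℝ) (hf0 : f 0 = 1) (hf1 : 0 < f 1)
    (hconv : ∀ n : ℕ, 1 ≤ n → f n ^ 2 ≤ f (n + 1) * f (n - 1))
    (hrec : ∀ n : ℕ, 1 ≤ n → f n = ∑ k ∈ Finset.Icc 1 n, fhat k * f (n - k)) :
    ∀ n : ℕ, 1 ≤ n → 0 ≤ fhat n := by
  -- positivity of f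
  have hpos : ∀ n, 0 < f n := by
    have h2 : ∀ n, 0 < f n ∧ 0 < f (n + 1) := by
      intro n
      induction n with
      | zero => exact ⟨by rw [hf0]; norm_num, hf1⟩
      | succ m ih =>
        refine ⟨ih.2, ?_⟩
        have hc := hconv (m + 1) (by omega)
        simp only [Nat.add_sub_cancel] at hc
        have hsq : 0 < f (m + 1) ^ 2 := pow_pos ih.2 2
        nlinarith [ih.1, ih.2]
    exact fun n => (h2 n).1
  -- monotone ratios
  have hratio : ∀ m, ∀ j, j ≤ m → f (j + 1) * f m ≤ f (m + 1) * f j := by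
    intro m
    induction m with
    | zero => intro j hj; interval_cases j; exact le_refl _
    | succ m ih =>
      intro j hj
      rcases Nat.lt_or_ge j (m + 1) with h | h
      · have h1 := ih j (by omega)
        have h2 := hconv (m + 1) (by omega)
        simp only [Nat.add_sub_cancel] at h2
        nlinarith [hpos m, hpos (m + 1), hpos j, hpos (j + 1), hpos (m + 2),
          mul_le_mul h1 h2 (sq_nonneg _) (mul_pos (hpos (m + 1)) (hpos j)).le,
          mul_pos (hpos m) (hpos (m + 1))]
      · have : j = m + 1 := by omega
        subst this; exact le_refl _
  -- main induction
  have key : ∀ n, ∀ k, 1 ≤ k → k ≤ n → 0 ≤ fhat k := by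
    intro n
    induction n with
    | zero => intro k h1 h2; omega
    | succ n ih =>
      intro k hk1 hk2
      rcases Nat.lt_or_ge k (n + 1) with h | h
      · exact ih k hk1 (by omega)
      have hk : k = n + 1 := by omega
      subst hk
      have hr := hrec (n + 1) (by omega)
      rw [Finset.sum_Icc_succ_top (by omega : 1 ≤ n + 1)] at hr
      simp only [Nat.sub_self, hf0, mul_one] at hr
      rcases Nat.eq_zero_or_pos n with h0 | hn
      · subst h0
        simp only [show Finset.Icc 1 0 = ∅ from rfl, Finset.sum_empty, zero_add] at hr
        linarith
      have hsum : (∑ k ∈ Finset.Icc 1 n, fhat k * f (n + 1 - k)) * f n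
          ≤ f (n + 1) * (∑ k ∈ Finset.Icc 1 n, fhat k * f (n - k)) := by
        rw [Finset.sum_mul, Finset.mul_sum]
        apply Finset.sum_le_sum
        intro k hkm
        simp only [Finset.mem_Icc] at hkm
        have hj : n + 1 - k = (n - k) + 1 := by omega
        rw [hj]
        have hrr := hratio n (n - k) (by omega)
        have hk0 := ih k hkm.1 hkm.2
        calc fhat k * f (n - k + 1) * f n = fhat k * (f (n - k + 1) * f n) := by ring
          _ ≤ fhat k * (f (n + 1) * f (n - k)) :=
              mul_le_mul_of_nonneg_left hrr hk0
          _ = f (n + 1) * (fhat k * f (n - k)) := by ring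
      rw [← hrec n hn] at hsum
      have hS : (∑ k ∈ Finset.Icc 1 n, fhat k * f (n + 1 - k)) ≤ f (n + 1) :=
        le_of_mul_le_mul_right hsum (hpos n)
      linarith
  exact fun n hn => key n n hn le_rfl
end

section
/- Let (f_n)_{n≥0} be a sequence of real numbers with f_0 = 1, f_1 > 0, and f_{n+1} f_{n-1} > f_n^2 for all n ≥ 1. Define (f̂_n)_{n≥1} by f_n = Σ_{k=1}^n f̂_k f_{n-k} for n ≥ 1. Then f̂_n > 0 for all n ≥ 1. -/
/-- Strict Kaluza theorem: if `f 0 = 1`, `f 1 > 0` and the sequence `f` is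
strictly log-convex, then the coefficients `fhat` of `1 - 1/f(z)`, determined
by `f n = ∑_{k=1}^n fhat k * f (n-k)` for `n ≥ 1`, are all positive. -/
theorem kaluza_pos (f fhat : ℕ → ℝ) (hf0 : f 0 = 1) (hf1 : 0 < f 1)
    (hconv : ∀ n : ℕ, 1 ≤ n → f n ^ 2 < f (n + 1) * f (n - 1))
    (hrec : ∀ n : ℕ, 1 ≤ n → f n = ∑ k ∈ Finset.Icc 1 n, fhat k * f (n - k)) :
    ∀ n : ℕ, 1 ≤ n → 0 < fhat n := by
  -- positivity of f
  have fpos : ∀ n, 0 < f n := by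
    intro n
    induction n using Nat.strong_induction_on with
    | _ n ih =>
      match n, ih with
      | 0, _ => simp [hf0]
      | 1, _ => exact hf1
      | (m+2), ih =>
        have h := hconv (m+1) (by omega)
        simp only [Nat.add_sub_cancel] at h
        have h1 := ih (m+1) (by omega)
        have h0 := ih m (by omega)
        nlinarith [mul_pos h1 h1]
  -- ratio monotonicity
  have ratio : ∀ b a, a < b → f (a+1) * f b < f (b+1) * f a := by
    intro b
    induction b with
    | zero => intro a h; omega
    | succ b ihb =>
      intro a h
      have hb := hconv (b+1) (by omega)
      simp only [Nat.add_sub_cancel] at hb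
      rcases Nat.lt_succ_iff_lt_or_eq.mp h with h' | rfl
      · have h1 := ihb a h'
        have pb := fpos b
        have pb1 := fpos (b+1)
        have pa := fpos a
        nlinarith [mul_lt_mul_of_pos_right h1 pb1, mul_lt_mul_of_pos_right hb pa]
      · nlinarith [hb]
  intro n
  induction n using Nat.strong_induction_on with
  | _ n ih =>
    intro hn
    match n, hn, ih with
    | 1, _, _ =>
      have h := hrec 1 le_rfl
      simp [hf0] at h
      linarith
    | (m+2), _, ih =>
      have h2 := hrec (m+2) (by omega)
      rw [Finset.sum_Icc_succ_top (by omega : 1 ≤ m+2)] at h2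
      simp only [Nat.sub_self, hf0, mul_one] at h2
      have h1 := hrec (m+1) (by omega)
      have key : f (m+1) * fhat (m+2)
          = ∑ k ∈ Finset.Icc 1 (m+1),
              fhat k * (f (m+2) * f (m+1-k) - f (m+2-k) * f (m+1)) := by
        have e : (∑ k ∈ Finset.Icc 1 (m+1),
              fhat k * (f (m+2) * f (m+1-k) - f (m+2-k) * f (m+1)))
            = f (m+2) * (∑ k ∈ Finset.Icc 1 (m+1), fhat k * f (m+1-k))
              - (∑ k ∈ Finset.Icc 1 (m+1), fhat k * f (m+2-k)) * f (m+1) := by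
          rw [Finset.mul_sum, Finset.sum_mul, ← Finset.sum_sub_distrib]
          exact Finset.sum_congr rfl fun k _ => by ring
        rw [e, ← h1]
        linear_combination (-(f (m+1))) * h2
      have hsum : 0 < ∑ k ∈ Finset.Icc 1 (m+1),
          fhat k * (f (m+2) * f (m+1-k) - f (m+2-k) * f (m+1)) := by
        apply Finset.sum_pos
        · intro k hk
          rw [Finset.mem_Icc] at hk
          have hk1 := ih k (by omega) hk.1
          apply mul_pos hk1
          have hr := ratio (m+1) (m+1-k) (by omega)
          have he : m+1-k+1 = m+2-k := by omega
          rw [he] at hr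
          linarith
        · exact ⟨1, by simp⟩
      have := fpos (m+1)
      nlinarith [key, hsum]
end

section
/- Let f(z) = Σ_{n≥0} f_n z^n be a formal power series with f_0 = 1 such that the formal power series f̂(z) = 1 - 1/f(z) has non-negative coefficients, and let (h_n)_{n≥0} be a non-decreasing sequence of non-negative real numbers. Set g(z) = Σ_{n≥0} h_n f_n z^n. Then all coefficients of the formal power series g(z)/f(z) are non-negative. -/
open PowerSeries

/-- If `f` is a formal power series with constant coefficient `1` such that
`1 - 1/f` has non-negative coefficients, and `(h n)` is a non-decreasing
sequence of non-negative reals, then `g/f` has non-negative coefficients,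
where `g = ∑ h n * f n * z^n`. -/
theorem quotient_nonneg_coeffs (f : PowerSeries ℝ) (hf0 : constantCoeff f = 1)
    (hfhat : ∀ n : ℕ, 0 ≤ coeff n (1 - f⁻¹))
    (h : ℕ → ℝ) (hmono : Monotone h) (hnonneg : ∀ n, 0 ≤ h n) :
    ∀ n : ℕ, 0 ≤ coeff n (PowerSeries.mk (fun n => h n * coeff n f) * f⁻¹) := by
  set φ : PowerSeries ℝ := 1 - f⁻¹ with hφdef
  have hφ0 : coeff 0 φ = 0 := by
    simp [hφdef, PowerSeries.coeff_zero_eq_constantCoeff, hf0]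
  have hunit : f * f⁻¹ = 1 := PowerSeries.mul_inv_cancel _ (by simp [hf0])
  have hinv : f⁻¹ = 1 - φ := by rw [hφdef]; ring
  have hf_eq : f = 1 + f * φ := by
    rw [hinv] at hunit; linear_combination hunit
  have hcoef : ∀ n : ℕ, coeff n f =
      (if n = 0 then (1:ℝ) else 0) +
        ∑ p ∈ Finset.HasAntidiagonal.antidiagonal n, coeff p.1 f * coeff p.2 φ := by
    intro n
    conv_lhs => rw [hf_eq]
    rw [map_add, PowerSeries.coeff_one, PowerSeries.coeff_mul]
  have hfnn : ∀ n, 0 ≤ coeff n f := by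
    intro n
    induction n using Nat.strong_induction_on with
    | _ n ih =>
      rw [hcoef n]
      apply add_nonneg (by positivity)
      apply Finset.sum_nonneg
      intro p hp
      rw [Finset.HasAntidiagonal.mem_antidiagonal] at hp
      by_cases h2 : p.2 = 0
      · rw [h2, hφ0, mul_zero]
      · exact mul_nonneg (ih p.1 (by omega)) (hfhat p.2)
  intro n
  rw [hinv, mul_sub, mul_one, map_sub, PowerSeries.coeff_mk, PowerSeries.coeff_mul]
  rw [hcoef n, mul_add, Finset.mul_sum]
  have : ∀ p ∈ Finset.HasAntidiagonal.antidiagonal n,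
      coeff p.1 (PowerSeries.mk fun n => h n * coeff n f) * coeff p.2 φ
        = h p.1 * (coeff p.1 f * coeff p.2 φ) := by
    intro p _; rw [PowerSeries.coeff_mk]; ring
  rw [Finset.sum_congr rfl this]
  have key : 0 ≤ ∑ p ∈ Finset.HasAntidiagonal.antidiagonal n,
      (h n * (coeff p.1 f * coeff p.2 φ) - h p.1 * (coeff p.1 f * coeff p.2 φ)) := by
    apply Finset.sum_nonneg
    intro p hp
    rw [Finset.HasAntidiagonal.mem_antidiagonal] at hp
    have h1 : h p.1 ≤ h n := hmono (by omega)
    have := mul_nonneg (hfnn p.1) (hfhat p.2)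
    nlinarith
  rw [Finset.sum_sub_distrib] at key
  have hδ : 0 ≤ h n * (if n = 0 then (1:ℝ) else 0) := by
    split <;> simp [hnonneg n]
  linarith
end

section
/- Let f(z) = Σ_{n≥0} f_n z^n be a formal power series with f_0 = 1 such that all f_n > 0 and all non-constant coefficients of f̂(z) = 1 - 1/f(z) are positive, and let (h_n)_{n≥0} be a strictly increasing sequence of non-negative reals with h_0 = 0. Then all coefficients of g(z)/f(z) are positive except the constant coefficient, which is zero, where g(z) = Σ_{n≥0} h_n f_n z^n. -/
open PowerSeries

/-- If `f` is a formal power series with constant coefficient `1`, positive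
coefficients, and all non-constant coefficients of `1 - 1/f` positive, and
`(h n)` is a strictly increasing sequence of non-negative reals with `h 0 = 0`,
then all coefficients of `g/f` are positive except the constant one, which is
zero, where `g = ∑ h n * f n * z^n`. -/
theorem quotient_pos_coeffs (f : PowerSeries ℝ) (hf0 : constantCoeff f = 1)
    (hfpos : ∀ n : ℕ, 0 < coeff n f)
    (hfhat : ∀ n : ℕ, 1 ≤ n → 0 < coeff n (1 - f⁻¹))
    (h : ℕ → ℝ) (hmono : StrictMono h) (hnonneg : ∀ n, 0 ≤ h n) (h0 : h 0 = 0) :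
    (∀ n : ℕ, 1 ≤ n → 0 < coeff n (PowerSeries.mk (fun n => h n * coeff n f) * f⁻¹)) ∧
    coeff 0 (PowerSeries.mk (fun n => h n * coeff n f) * f⁻¹) = 0 := by
  set g : PowerSeries ℝ := PowerSeries.mk (fun n => h n * coeff n f) with hg
  have hfne : constantCoeff f ≠ 0 := by rw [hf0]; norm_num
  have hinv : f * f⁻¹ = 1 := PowerSeries.mul_inv_cancel f hfne
  set A : PowerSeries ℝ := 1 - f⁻¹ with hA
  have hA0 : coeff 0 A = 0 := by
    rw [hA]
    simp [PowerSeries.coeff_zero_eq_constantCoeff, PowerSeries.constantCoeff_inv, hf0]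
  have hq : g * f⁻¹ = g - g * A := by rw [hA]; ring
  have hfA : ∀ n : ℕ, 1 ≤ n → coeff n f = coeff n (f * A) := by
    intro n hn
    have h1 : f - f * A = 1 := by
      calc f - f * A = f * f⁻¹ := by rw [hA]; ring
        _ = 1 := hinv
    have := congrArg (coeff n) h1
    rw [map_sub] at this
    have hcn : coeff n (1 : PowerSeries ℝ) = 0 := by
      rw [PowerSeries.coeff_one]; simp [Nat.one_le_iff_ne_zero.mp hn]
    linarith [this, hcn.symm ▸ this]
  constructor
  · intro n hn
    have key : coeff n f = ∑ p ∈ Finset.HasAntidiagonal.antidiagonal n,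
        coeff p.1 f * coeff p.2 A := by
      rw [hfA n hn, PowerSeries.coeff_mul]
    have eq1 : coeff n (g * f⁻¹) =
        ∑ p ∈ Finset.HasAntidiagonal.antidiagonal n, (h n - h p.1) * (coeff p.1 f * coeff p.2 A) := by
      rw [hq, map_sub, PowerSeries.coeff_mul, hg, PowerSeries.coeff_mk, key,
        Finset.mul_sum, ← Finset.sum_sub_distrib]
      apply Finset.sum_congr rfl
      intro p _
      rw [PowerSeries.coeff_mk]
      ring
    rw [eq1]
    apply Finset.sum_pos'
    · intro p hp
      rcases Nat.eq_zero_or_pos p.2 with h2 | h2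
      · rw [h2, hA0]; simp
      · have hp1 : p.1 < n := by
          have := Finset.HasAntidiagonal.mem_antidiagonal.mp hp; omega
        exact le_of_lt (mul_pos (sub_pos.mpr (hmono hp1))
          (mul_pos (hfpos p.1) (hfhat p.2 h2)))
    · refine ⟨(0, n), Finset.HasAntidiagonal.mem_antidiagonal.mpr (by simp), ?_⟩
      have hn0 : 0 < h n := by
        have := hmono (show 0 < n from hn); rwa [h0] at this
      exact mul_pos (by rw [h0]; simpa) (mul_pos (hfpos 0) (hfhat n hn))
  · rw [PowerSeries.coeff_zero_eq_constantCoeff, map_mul, hg]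
    have : constantCoeff g = 0 := by
      rw [hg, ← PowerSeries.coeff_zero_eq_constantCoeff, PowerSeries.coeff_mk, h0, zero_mul]
    simp [← hg, this]
end

section
/- For any integer N ≥ 2, letting r_1, …, r_{φ(N)} be the integers in {1,…,N} coprime to N and C_N = N^{φ(N)} ∏_{p | N} p^{φ(N)/(p-1)}, the quantity B_N(m) = C_N^m ∏_{j=1}^{φ(N)} (r_j/N)_m / m! is a positive integer for every integer m ≥ 0. -/
/-- The constant `C_N = N^{φ(N)} ∏_{p ∣ N} p^{φ(N)/(p-1)}`. -/
def paperC (N : ℕ) : ℕ := N ^ N.totient * ∏ p ∈ N.primeFactors, p ^ (N.totient / (p - 1))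

/-- The totatives of `N` in `{1,…,N}`. -/
def totSet (N : ℕ) : Finset ℕ := (Finset.Icc 1 N).filter (fun r => Nat.Coprime r N)

open Finset Nat

def bigD (N : ℕ) : ℕ := ∏ p ∈ N.primeFactors, p ^ (N.totient / (p - 1))
def bigT (N m : ℕ) : Finset ℕ := (Finset.Icc 1 (m * N)).filter (fun j => Nat.Coprime j N)
def bigA (N m : ℕ) : ℕ := ∏ j ∈ bigT N m, j

lemma mem_bigT {N m j : ℕ} : j ∈ bigT N m ↔ (1 ≤ j ∧ j ≤ m * N) ∧ Nat.Coprime j N := by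
  simp [bigT, Finset.mem_filter, Finset.mem_Icc]

lemma decode_mod {N r k : ℕ} (h1 : 1 ≤ r) (h2 : r ≤ N) :
    (r + k * N - 1) % N + 1 = r := by
  have e : r + k * N - 1 = (r - 1) + k * N := by omega
  have hN : 0 < N := by omega
  rw [e, Nat.add_mul_mod_self_right, Nat.mod_eq_of_lt (by omega)]
  omega

lemma decode_div {N r k : ℕ} (h1 : 1 ≤ r) (h2 : r ≤ N) :
    (r + k * N - 1) / N = k := by
  have e : r + k * N - 1 = (r - 1) + k * N := by omega
  have hN : 0 < N := by omega
  rw [e, Nat.add_mul_div_right _ _ hN, Nat.div_eq_of_lt (by omega)]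
  omega

lemma card_totSet {N : ℕ} (hN : 2 ≤ N) : (totSet N).card = N.totient := by
  rw [Nat.totient]
  congr 1
  ext a
  simp only [totSet, mem_filter, mem_Icc, mem_range]
  constructor
  · rintro ⟨⟨h1, h2⟩, hc⟩
    have : a ≠ N := by
      rintro rfl
      simp [Nat.Coprime, Nat.gcd_self] at hc; omega
    exact ⟨by omega, hc.symm⟩
  · rintro ⟨h1, hc⟩
    have hc' := Nat.Coprime.symm hc
    have : a ≠ 0 := by
      rintro rfl
      simp [Nat.Coprime] at hc'; omega
    exact ⟨⟨by omega, by omega⟩, hc'⟩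


lemma prodA (N m : ℕ) (hN : 2 ≤ N) :
    ∏ x ∈ (totSet N) ×ˢ (Finset.range m), (x.1 + x.2 * N) = bigA N m := by
  have hN0 : 0 < N := by omega
  refine Finset.prod_nbij' (fun x => x.1 + x.2 * N)
    (fun j => ((j - 1) % N + 1, (j - 1) / N)) ?_ ?_ ?_ ?_ ?_
  · rintro ⟨r, k⟩ hx
    simp only [mem_product, totSet, mem_filter, mem_Icc, mem_range] at hx
    obtain ⟨⟨⟨h1, h2⟩, hc⟩, hk⟩ := hx
    simp only [bigT, mem_filter, mem_Icc]
    refine ⟨⟨by omega, ?_⟩, (Nat.coprime_add_mul_right_left r N k).mpr hc⟩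
    calc r + k * N ≤ (k + 1) * N := by ring_nf; omega
      _ ≤ m * N := Nat.mul_le_mul_right N (by omega)
  · intro j hj
    simp only [bigT, mem_filter, mem_Icc] at hj
    obtain ⟨⟨h1, h2⟩, hc⟩ := hj
    have hmod : (j - 1) % N < N := Nat.mod_lt _ hN0
    have hjj : (j - 1) % N + 1 + (j - 1) / N * N = j := by
      have h := Nat.mod_add_div (j - 1) N
      have h' : (j - 1) / N * N = N * ((j - 1) / N) := Nat.mul_comm _ _
      omega
    simp only [mem_product, totSet, mem_filter, mem_Icc, mem_range]
    refine ⟨⟨⟨by omega, by omega⟩, ?_⟩, ?_⟩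
    · have := (Nat.coprime_add_mul_right_left ((j - 1) % N + 1) N ((j - 1) / N))
      rw [hjj] at this
      exact this.mp hc
    · have hcomm : m * N = N * m := Nat.mul_comm _ _
      exact Nat.div_lt_of_lt_mul (by omega)
  · rintro ⟨r, k⟩ hx
    simp only [mem_product, totSet, mem_filter, mem_Icc, mem_range] at hx
    obtain ⟨⟨⟨h1, h2⟩, hc⟩, hk⟩ := hx
    simp only [decode_mod h1 h2, decode_div h1 h2]
  · intro j hj
    simp only [bigT, mem_filter, mem_Icc] at hj
    have hmod : (j - 1) % N < N := Nat.mod_lt _ hN0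
    show (j - 1) % N + 1 + (j - 1) / N * N = j
    have h := Nat.mod_add_div (j - 1) N
    have h' : (j - 1) / N * N = N * ((j - 1) / N) := Nat.mul_comm _ _
    omega
  · exact fun a _ => rfl

lemma count_ge {N m q : ℕ} (hN : 2 ≤ N) (hq : q.Prime) (hqN : ¬ q ∣ N) (i : ℕ) :
    N.totient * (m / q ^ i) ≤ ((bigT N m).filter (fun j => q ^ i ∣ j)).card := by
  have hq0 : 0 < q ^ i := Nat.pow_pos hq.pos
  have key : ((Finset.Icc 1 (m / q ^ i)) ×ˢ totSet N).card ≤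
      ((bigT N m).filter (fun j => q ^ i ∣ j)).card := by
    apply Finset.card_le_card_of_injOn (fun x => q ^ i * ((x.1 - 1) * N + x.2))
    · rintro ⟨t, r⟩ hx
      simp only [mem_coe, mem_product, mem_Icc, totSet, mem_filter] at hx
      obtain ⟨⟨ht1, ht2⟩, ⟨hr1, hr2⟩, hc⟩ := hx
      have hr : 1 ≤ r ∧ r ≤ N := ⟨hr1, hr2⟩
      simp only [mem_coe, mem_filter, bigT, mem_Icc]
      have ht : t - 1 + 1 = t := by omega
      have hb : (t - 1) * N + r ≤ t * N := by
        calc (t - 1) * N + r ≤ (t - 1) * N + N := by omega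
          _ = (t - 1 + 1) * N := by ring
          _ = t * N := by rw [ht]
      have hqt : q ^ i * t ≤ m := by
        have := (Nat.le_div_iff_mul_le hq0).mp ht2
        nlinarith [this]
      refine ⟨⟨⟨Nat.mul_pos hq0 (by omega), ?_⟩, ?_⟩, Dvd.intro _ rfl⟩
      · calc q ^ i * ((t - 1) * N + r) ≤ q ^ i * (t * N) := Nat.mul_le_mul_left _ hb
          _ = (q ^ i * t) * N := by ring
          _ ≤ m * N := Nat.mul_le_mul_right _ hqt
      · have hcq : Nat.Coprime q N := (Nat.Prime.coprime_iff_not_dvd hq).mpr hqN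
        have h1 : Nat.Coprime (q ^ i) N := Nat.Coprime.pow_left _ hcq
        have h2 : Nat.Coprime ((t - 1) * N + r) N := by
          have := (Nat.coprime_add_mul_right_left r N (t - 1)).mpr hc
          rwa [add_comm] at this
        exact Nat.Coprime.mul h1 h2
    · rintro ⟨t, r⟩ hx ⟨t', r'⟩ hx' he
      simp only [coe_product, Set.mem_prod, mem_coe, mem_Icc, totSet, mem_filter] at hx hx'
      obtain ⟨⟨ht1, ht2⟩, ⟨hra, hrb⟩, hc⟩ := hx
      obtain ⟨⟨ht1', ht2'⟩, ⟨hra', hrb'⟩, hc'⟩ := hx'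
      have hr : 1 ≤ r ∧ r ≤ N := ⟨hra, hrb⟩
      have hr' : 1 ≤ r' ∧ r' ≤ N := ⟨hra', hrb'⟩
      simp only at he
      have he2 : (t - 1) * N + r = (t' - 1) * N + r' := by
        exact Nat.eq_of_mul_eq_mul_left hq0 he
      have e1 : r + (t - 1) * N = r' + (t' - 1) * N := by omega
      have d1 := decode_mod (N := N) (r := r) (k := t - 1) hr.1 hr.2
      have d2 := decode_div (N := N) (r := r) (k := t - 1) hr.1 hr.2
      have d1' := decode_mod (N := N) (r := r') (k := t' - 1) hr'.1 hr'.2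
      have d2' := decode_div (N := N) (r := r') (k := t' - 1) hr'.1 hr'.2
      rw [e1] at d1 d2
      have : r = r' := by omega
      have : t = t' := by omega
      simp_all
  calc N.totient * (m / q ^ i) = (m / q ^ i) * N.totient := Nat.mul_comm _ _
    _ = ((Finset.Icc 1 (m / q ^ i)) ×ˢ totSet N).card := by
        rw [Finset.card_product, Nat.card_Icc, card_totSet hN, Nat.add_sub_cancel]
    _ ≤ _ := key


lemma bigT_ne_zero {N m j : ℕ} (hj : j ∈ bigT N m) : j ≠ 0 := by
  simp only [bigT, mem_filter, mem_Icc] at hj; omega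

lemma bigA_pos (N m : ℕ) : 0 < bigA N m :=
  Finset.prod_pos (fun j hj => Nat.pos_of_ne_zero (bigT_ne_zero hj))

lemma bigD_pos (N : ℕ) : 0 < bigD N :=
  Finset.prod_pos (fun p hp => pow_pos (Nat.prime_of_mem_primeFactors hp).pos _)

lemma val_A {N m q : ℕ} (hN : 2 ≤ N) (hq : q.Prime) (hqN : ¬ q ∣ N) :
    N.totient * ((m !).factorization q) ≤ (bigA N m).factorization q := by
  haveI : Fact q.Prime := ⟨hq⟩
  have hb : Nat.log q m < m + 1 := lt_of_le_of_lt (Nat.log_le_self _ _) (by omega)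
  have h1 : (m !).factorization q = ∑ i ∈ Ico 1 (m + 1), m / q ^ i := by
    rw [Nat.factorization_def _ hq, padicValNat_factorial hb]
  have h2 : (bigA N m).factorization q = ∑ j ∈ bigT N m, (Nat.factorization j) q := by
    rw [bigA, Nat.factorization_prod (fun j hj => bigT_ne_zero hj)]
    exact Finsupp.finset_sum_apply _ _ _
  have h3 : ∀ j ∈ bigT N m,
      ((Ico 1 (m + 1)).filter (fun i => q ^ i ∣ j)).card ≤ (Nat.factorization j) q := by
    intro j hj
    have hsub : (Ico 1 (m + 1)).filter (fun i => q ^ i ∣ j) ⊆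
        Icc 1 ((Nat.factorization j) q) := by
      intro i hi
      simp only [mem_filter, mem_Ico] at hi
      simp only [mem_Icc]
      exact ⟨hi.1.1, (hq.pow_dvd_iff_le_factorization (bigT_ne_zero hj)).mp hi.2⟩
    have := Finset.card_le_card hsub
    simpa [Nat.card_Icc] using this
  have h4 : ∑ i ∈ Ico 1 (m + 1), ((bigT N m).filter (fun j => q ^ i ∣ j)).card
      = ∑ j ∈ bigT N m, ((Ico 1 (m + 1)).filter (fun i => q ^ i ∣ j)).card := by
    simp only [Finset.card_filter]
    exact Finset.sum_comm
  calc N.totient * ((m !).factorization q)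
      = ∑ i ∈ Ico 1 (m + 1), N.totient * (m / q ^ i) := by rw [h1, Finset.mul_sum]
    _ ≤ ∑ i ∈ Ico 1 (m + 1), ((bigT N m).filter (fun j => q ^ i ∣ j)).card :=
        Finset.sum_le_sum (fun i _ => count_ge hN hq hqN i)
    _ = ∑ j ∈ bigT N m, ((Ico 1 (m + 1)).filter (fun i => q ^ i ∣ j)).card := h4
    _ ≤ ∑ j ∈ bigT N m, (Nat.factorization j) q := Finset.sum_le_sum h3
    _ = (bigA N m).factorization q := h2.symm

lemma dvd_main {N : ℕ} (m : ℕ) (hN : 2 ≤ N) :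
    (m ! ^ N.totient) ∣ (bigD N ^ m * bigA N m) := by
  have hA0 : bigA N m ≠ 0 := (bigA_pos N m).ne'
  have hD0 : bigD N ≠ 0 := (bigD_pos N).ne'
  have hn0 : bigD N ^ m * bigA N m ≠ 0 := mul_ne_zero (pow_ne_zero _ hD0) hA0
  have hd0 : (m ! ^ N.totient) ≠ 0 := pow_ne_zero _ (factorial_ne_zero m)
  rw [← Nat.factorization_le_iff_dvd hd0 hn0]
  intro p
  by_cases hp : p.Prime
  · have hL : (m ! ^ N.totient).factorization p = N.totient * (m !).factorization p := by
      rw [Nat.factorization_pow]; rfl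
    rw [hL]
    by_cases hpN : p ∣ N
    · haveI : Fact p.Prime := ⟨hp⟩
      set v := (m !).factorization p with hv
      set e := N.totient / (p - 1) with he'
      have hdv : (p - 1) ∣ N.totient := by
        have := Nat.totient_dvd_of_dvd hpN
        rwa [Nat.totient_prime hp] at this
      have he : (p - 1) * e = N.totient := Nat.mul_div_cancel' hdv
      have h1 : (p - 1) * v ≤ m := by
        rw [hv, Nat.factorization_def _ hp, sub_one_mul_padicValNat_factorial m]
        omega
      have h2 : N.totient * v ≤ e * m := by
        calc N.totient * v = e * ((p - 1) * v) := by rw [← he]; ring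
          _ ≤ e * m := Nat.mul_le_mul_left e h1
      have hpe : p ^ e ∣ bigD N := by
        have hmem : p ∈ N.primeFactors :=
          Nat.mem_primeFactors.mpr ⟨hp, hpN, by omega⟩
        exact Finset.dvd_prod_of_mem (fun p => p ^ (N.totient / (p - 1))) hmem
      have hdvd2 : p ^ (e * m) ∣ bigD N ^ m * bigA N m := by
        apply dvd_mul_of_dvd_left
        rw [pow_mul]
        exact pow_dvd_pow_of_dvd hpe m
      have h3 : e * m ≤ (bigD N ^ m * bigA N m).factorization p :=
        (hp.pow_dvd_iff_le_factorization hn0).mp hdvd2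
      omega
    · have h1 := val_A (m := m) hN hp hpN
      have h2 : (bigD N ^ m * bigA N m).factorization p
          = (bigD N ^ m).factorization p + (bigA N m).factorization p := by
        rw [Nat.factorization_mul (pow_ne_zero _ hD0) hA0]; rfl
      omega
  · simp [Nat.factorization_eq_zero_of_not_prime _ hp]


lemma asc_eval_prod (m : ℕ) (x : ℝ) :
    (ascPochhammer ℝ m).eval x = ∏ k ∈ range m, (x + k) := by
  induction m with
  | zero => simp
  | succ n ih =>
    rw [ascPochhammer_succ_right, Polynomial.eval_mul, ih, prod_range_succ]
    simp

/-- For `N ≥ 2` and `m ≥ 0`, the quantity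
`B_N(m) = C_N^m ∏_{j=1}^{φ(N)} (r_j/N)_m / m!` is a positive integer. -/
theorem BN_posint (N : ℕ) (hN : 2 ≤ N) (m : ℕ) :
    ∃ b : ℕ, 0 < b ∧
      (paperC N : ℝ) ^ m *
        ∏ r ∈ totSet N, ((ascPochhammer ℝ m).eval ((r : ℝ) / N) / (m.factorial : ℝ))
      = b := by
  have hNr : (N : ℝ) ≠ 0 := Nat.cast_ne_zero.mpr (by omega)
  have hfr : (m ! : ℝ) ≠ 0 := Nat.cast_ne_zero.mpr (factorial_ne_zero m)
  have hdvd := dvd_main m hN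
  refine ⟨(bigD N ^ m * bigA N m) / (m ! ^ N.totient), ?_, ?_⟩
  · have hpos : 0 < bigD N ^ m * bigA N m :=
      Nat.mul_pos (Nat.pow_pos (bigD_pos N)) (bigA_pos N m)
    exact Nat.div_pos (Nat.le_of_dvd hpos hdvd) (Nat.pow_pos (factorial_pos m))
  · have hcast : ((bigD N ^ m * bigA N m) / (m ! ^ N.totient) : ℕ) = 
        ((bigD N : ℝ) ^ m * (bigA N m : ℝ)) / ((m ! : ℝ) ^ N.totient) := by
      rw [Nat.cast_div hdvd (by positivity)]
      push_cast
      ring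
    rw [hcast]
    -- compute the product of Pochhammer evals
    have step1 : ∏ r ∈ totSet N, (ascPochhammer ℝ m).eval ((r : ℝ) / N)
        = (bigA N m : ℝ) / ((N : ℝ) ^ m) ^ N.totient := by
      have e1 : ∀ r ∈ totSet N, (ascPochhammer ℝ m).eval ((r : ℝ) / N)
          = (∏ k ∈ range m, ((r + k * N : ℕ) : ℝ)) / (N : ℝ) ^ m := by
        intro r _
        rw [asc_eval_prod]
        have e0 : ∀ k ∈ range m, (r : ℝ) / N + k = ((r + k * N : ℕ) : ℝ) / N := by
          intro k _
          push_cast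
          field_simp
        rw [Finset.prod_congr rfl e0, Finset.prod_div_distrib, Finset.prod_const,
          Finset.card_range]
      rw [Finset.prod_congr rfl e1, Finset.prod_div_distrib, Finset.prod_const,
        card_totSet hN]
      have e2 : ∏ r ∈ totSet N, ∏ k ∈ range m, ((r + k * N : ℕ) : ℝ)
          = (bigA N m : ℝ) := by
        rw [← prodA N m hN]
        push_cast [Finset.prod_product]
        rfl
      rw [e2]
    have hprod : ∏ r ∈ totSet N, ((ascPochhammer ℝ m).eval ((r : ℝ) / N) / (m ! : ℝ))
        = ((bigA N m : ℝ) / ((N : ℝ) ^ m) ^ N.totient) / (m ! : ℝ) ^ N.totient := by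
      rw [Finset.prod_div_distrib, Finset.prod_const, card_totSet hN, step1]
    rw [hprod]
    have hC : (paperC N : ℝ) = (N : ℝ) ^ N.totient * (bigD N : ℝ) := by
      have : paperC N = N ^ N.totient * bigD N := rfl
      rw [this]; push_cast; ring
    rw [hC]
    field_simp
    ring
end

section
/- For integers N_1, …, N_k all at least 2, define B_N(m) = ∏_{j=1}^k C_{N_j}^m ∏_{i=1}^{φ(N_j)} (r_{i,j}/N_j)_m / m!, where for each j the r_{i,j} are the residues in {1,…,N_j} coprime to N_j. Then B_N(1) > 0 and B_N(m+1) B_N(m-1) > B_N(m)^2 for all m ≥ 1. -/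
/-- `B_N(m) = ∏_j C_{N_j}^m ∏_i (r_{i,j}/N_j)_m / m!`. -/
noncomputable def paperB {k : ℕ} (N : Fin k → ℕ) (m : ℕ) : ℝ :=
  ∏ j : Fin k, ((paperC (N j) : ℝ) ^ m *
    ∏ r ∈ totSet (N j), ((ascPochhammer ℝ m).eval ((r : ℝ) / (N j)) / (m.factorial : ℝ)))

lemma one_mem_totSet {n : ℕ} (hn : 1 ≤ n) : 1 ∈ totSet n := by
  simp [totSet, Nat.Coprime, hn]

lemma x_pos {n r : ℕ} (hn : 2 ≤ n) (hr : r ∈ totSet n) : 0 < (r : ℝ) / n := by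
  simp only [totSet, Finset.mem_filter, Finset.mem_Icc] at hr
  have : (0:ℝ) < n := by positivity
  apply div_pos (by exact_mod_cast hr.1.1) this

lemma x_lt_one {n r : ℕ} (hn : 2 ≤ n) (hr : r ∈ totSet n) : (r : ℝ) / n < 1 := by
  simp only [totSet, Finset.mem_filter, Finset.mem_Icc] at hr
  obtain ⟨⟨h1, h2⟩, hc⟩ := hr
  have hrn : r < n := by
    rcases lt_or_eq_of_le h2 with h | rfl
    · exact h
    · have := Nat.gcd_self r; unfold Nat.Coprime at hc; omega
  have hnp : (0:ℝ) < n := by positivity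
  rw [div_lt_one hnp]; exact_mod_cast hrn

lemma paperC_pos {n : ℕ} (hn : 2 ≤ n) : 0 < paperC n := by
  unfold paperC
  exact Nat.mul_pos (Nat.pow_pos (by omega))
    (Finset.prod_pos fun p hp => Nat.pow_pos (Nat.pos_of_mem_primeFactors hp))

/-- The ratio `B(m+1)/B(m)`. -/
noncomputable def paperR {k : ℕ} (N : Fin k → ℕ) (m : ℕ) : ℝ :=
  ∏ j : Fin k, ((paperC (N j) : ℝ) *
    ∏ r ∈ totSet (N j), (((r : ℝ) / (N j) + m) / (m + 1)))

lemma paperB_pos {k : ℕ} {N : Fin k → ℕ} (hN : ∀ j, 2 ≤ N j) (m : ℕ) : 0 < paperB N m := by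
  apply Finset.prod_pos
  intro j _
  apply mul_pos
  · have := paperC_pos (hN j); positivity
  · exact Finset.prod_pos fun r hr => div_pos
      (ascPochhammer_pos m _ (x_pos (hN j) hr)) (by positivity)

lemma paperR_pos {k : ℕ} {N : Fin k → ℕ} (hN : ∀ j, 2 ≤ N j) (m : ℕ) : 0 < paperR N m := by
  apply Finset.prod_pos
  intro j _
  apply mul_pos
  · exact_mod_cast paperC_pos (hN j)
  · exact Finset.prod_pos fun r hr => div_pos
      (by have := x_pos (hN j) hr; positivity) (by positivity)

lemma paperB_succ {k : ℕ} (N : Fin k → ℕ) (m : ℕ) :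
    paperB N (m + 1) = paperB N m * paperR N m := by
  unfold paperB paperR
  rw [← Finset.prod_mul_distrib]
  apply Finset.prod_congr rfl
  intro j _
  have hfac : ((m+1).factorial : ℝ) = (m.factorial : ℝ) * (m + 1) := by
    rw [Nat.factorial_succ]; push_cast; ring
  have h1 : ∀ r ∈ totSet (N j),
      (ascPochhammer ℝ (m+1)).eval ((r : ℝ) / (N j)) / ((m+1).factorial : ℝ) =
      (ascPochhammer ℝ m).eval ((r : ℝ) / (N j)) / (m.factorial : ℝ) *
        (((r : ℝ) / (N j) + m) / (m + 1)) := by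
    intro r _
    rw [ascPochhammer_succ_eval, hfac]
    have h2 : (m.factorial : ℝ) ≠ 0 := by positivity
    have h3 : (m : ℝ) + 1 ≠ 0 := by positivity
    field_simp
  rw [Finset.prod_congr rfl h1, Finset.prod_mul_distrib, pow_succ]
  ring

lemma paperR_strictMono {k : ℕ} {N : Fin k → ℕ} (hk : 0 < k) (hN : ∀ j, 2 ≤ N j) (m : ℕ) :
    paperR N m < paperR N (m + 1) := by
  unfold paperR
  apply Finset.prod_lt_prod_of_nonempty
  · intro j _
    apply mul_pos
    · exact_mod_cast paperC_pos (hN j)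
    · exact Finset.prod_pos fun r hr => div_pos
        (by have := x_pos (hN j) hr; positivity) (by positivity)
  · intro j _
    apply mul_lt_mul_of_pos_left _ (by exact_mod_cast paperC_pos (hN j))
    apply Finset.prod_lt_prod_of_nonempty
    · intro r hr
      exact div_pos (by have := x_pos (hN j) hr; positivity) (by positivity)
    · intro r hr
      have hx0 := x_pos (hN j) hr
      have hx1 := x_lt_one (hN j) hr
      rw [div_lt_div_iff₀ (by positivity) (by positivity)]
      push_cast
      nlinarith [hx0, hx1]
    · exact ⟨1, one_mem_totSet (by have := hN j; omega)⟩
  · exact ⟨⟨0, hk⟩, Finset.mem_univ _⟩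

/-- For `N_1, …, N_k ≥ 2`, the sequence `(B_N(m))` satisfies `B_N(1) > 0` and is
strictly log-convex: `B_N(m+1) B_N(m-1) > B_N(m)^2` for `m ≥ 1`. -/
theorem BN_strict_logconvex {k : ℕ} (hk : 0 < k) (N : Fin k → ℕ) (hN : ∀ j, 2 ≤ N j) :
    0 < paperB N 1 ∧ ∀ m : ℕ, 1 ≤ m → paperB N m ^ 2 < paperB N (m + 1) * paperB N (m - 1) := by
  refine ⟨paperB_pos hN 1, ?_⟩
  intro m hm
  obtain ⟨n, rfl⟩ : ∃ n, m = n + 1 := ⟨m - 1, by omega⟩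
  have hsub : n + 1 - 1 = n := rfl
  rw [hsub, paperB_succ N n, paperB_succ N (n + 1), paperB_succ N n]
  have hB := paperB_pos hN n
  have hR := paperR_pos hN n
  have hR' := paperR_pos hN (n + 1)
  have hlt := paperR_strictMono hk hN n
  have key := mul_lt_mul_of_pos_left hlt (mul_pos (mul_pos hB hB) hR)
  nlinarith [key]
end

section
/- For every real x ≥ 1, Γ(x+1) = √(2πx)·(x/e)^x·e^{λ_x} for some λ_x with 1/(12x+1) < λ_x < 1/(12x). In particular √(2πx)(x/e)^x e^{1/(12x+1)} < Γ(x+1) < √(2πx)(x/e)^x e^{1/(12x)}. -/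
open Real

open Filter Topology Set

lemma log_ratio_lower {y : ℝ} (h0 : 0 < y) (h1 : y < 1) :
    2*y + 2/3*y^3 < Real.log (1+y) - Real.log (1-y) := by
  set f : ℝ → ℝ := fun z => Real.log (1+z) - Real.log (1-z) - (2*z + 2/3*z^3) with hf
  have key : ∀ z ∈ Set.Ioo (0:ℝ) 1, HasDerivAt f (2*z^4/(1-z^2)) z := by
    intro z hz
    have hz1 : (0:ℝ) < 1 + z := by linarith [hz.1]
    have hz2 : (0:ℝ) < 1 - z := by linarith [hz.2]
    have d1 : HasDerivAt (fun w : ℝ => Real.log (1+w)) (1/(1+z)) z := by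
      simpa using (((hasDerivAt_id z).const_add 1).log hz1.ne')
    have d2 : HasDerivAt (fun w : ℝ => Real.log (1-w)) (-1/(1-z)) z := by
      simpa using (((hasDerivAt_id z).const_sub 1).log hz2.ne')
    have d3 : HasDerivAt (fun w : ℝ => 2*w + 2/3*w^3) (2 + 2*z^2) z := by
      have := ((hasDerivAt_pow 3 z).const_mul (2/3:ℝ)).const_add (0:ℝ)
      have h := ((hasDerivAt_id z).const_mul (2:ℝ)).add ((hasDerivAt_pow 3 z).const_mul (2/3:ℝ))
      exact h.congr_deriv (by push_cast; ring)
    have h2 : (1:ℝ) - z^2 ≠ 0 := by nlinarith [hz.1, hz.2]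
    have := (d1.sub d2).sub d3
    refine this.congr_deriv ?_
    field_simp
    ring
  have hmono : StrictMonoOn f (Set.Icc 0 y) := by
    apply strictMonoOn_of_deriv_pos (convex_Icc 0 y)
    · apply ContinuousOn.sub
      · apply ContinuousOn.sub
        · apply ContinuousOn.log (by fun_prop)
          intro z hz; simp only [Set.mem_Icc] at hz; nlinarith [hz.1]
        · apply ContinuousOn.log (by fun_prop)
          intro z hz; simp only [Set.mem_Icc] at hz; nlinarith [hz.2]
      · fun_prop
    · intro z hz
      rw [interior_Icc, Set.mem_Ioo] at hz
      have hz' : z ∈ Set.Ioo (0:ℝ) 1 := ⟨hz.1, lt_trans hz.2 h1⟩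
      rw [(key z hz').deriv]
      have h2 : 0 < 1 - z^2 := by nlinarith [hz'.1, hz'.2]
      have hzp : 0 < z := hz'.1
      apply div_pos (by nlinarith [pow_pos hzp 4]) (by positivity)
  have h0y : (0:ℝ) ∈ Set.Icc (0:ℝ) y := by constructor <;> linarith
  have hyy : y ∈ Set.Icc (0:ℝ) y := by constructor <;> linarith
  have := hmono h0y hyy h0
  simp only [hf] at this
  simp only [add_zero, sub_zero, Real.log_one] at this
  nlinarith [this]

lemma log_ratio_upper {y : ℝ} (h0 : 0 < y) (h1 : y < 1) :
    Real.log (1+y) - Real.log (1-y) < 2*y + 2*y^3/(3*(1-y^2)) := by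
  set f : ℝ → ℝ := fun z => (2*z + 2*z^3/(3*(1-z^2))) - (Real.log (1+z) - Real.log (1-z)) with hf
  have key : ∀ z ∈ Set.Ioo (0:ℝ) 1, HasDerivAt f (4*z^4/(3*(1-z^2)^2)) z := by
    intro z hz
    have hz1 : (0:ℝ) < 1 + z := by linarith [hz.1]
    have hz2 : (0:ℝ) < 1 - z := by linarith [hz.2]
    have hz3 : (0:ℝ) < 1 - z^2 := by nlinarith [hz.1, hz.2]
    have d1 : HasDerivAt (fun w : ℝ => Real.log (1+w)) (1/(1+z)) z := by
      simpa using (((hasDerivAt_id z).const_add 1).log hz1.ne')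
    have d2 : HasDerivAt (fun w : ℝ => Real.log (1-w)) (-1/(1-z)) z := by
      simpa using (((hasDerivAt_id z).const_sub 1).log hz2.ne')
    have dnum : HasDerivAt (fun w : ℝ => 2*w^3) (6*z^2) z := by
      have := (hasDerivAt_pow 3 z).const_mul (2:ℝ)
      exact this.congr_deriv (by push_cast; ring)
    have dden : HasDerivAt (fun w : ℝ => 3*(1-w^2)) (-6*z) z := by
      have := ((hasDerivAt_pow 2 z).const_sub 1).const_mul (3:ℝ)
      exact this.congr_deriv (by push_cast; ring)
    have dq : HasDerivAt (fun w : ℝ => 2*w^3/(3*(1-w^2)))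
        ((6*z^2*(3*(1-z^2)) - 2*z^3*(-6*z))/(3*(1-z^2))^2) z := dnum.div dden (by positivity)
    have dlin : HasDerivAt (fun w : ℝ => 2*w) (2:ℝ) z := by
      simpa using (hasDerivAt_id z).const_mul (2:ℝ)
    have := (dlin.add dq).sub (d1.sub d2)
    refine this.congr_deriv ?_
    field_simp
    ring
  have hmono : StrictMonoOn f (Set.Icc 0 y) := by
    apply strictMonoOn_of_deriv_pos (convex_Icc 0 y)
    · apply ContinuousOn.sub
      · apply ContinuousOn.add (by fun_prop)
        apply ContinuousOn.div (by fun_prop) (by fun_prop)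
        intro z hz; simp only [Set.mem_Icc] at hz
        have : z^2 < 1 := by nlinarith [hz.1, hz.2]
        nlinarith
      · apply ContinuousOn.sub
        · apply ContinuousOn.log (by fun_prop)
          intro z hz; simp only [Set.mem_Icc] at hz; nlinarith [hz.1]
        · apply ContinuousOn.log (by fun_prop)
          intro z hz; simp only [Set.mem_Icc] at hz; nlinarith [hz.2]
    · intro z hz
      rw [interior_Icc, Set.mem_Ioo] at hz
      have hz' : z ∈ Set.Ioo (0:ℝ) 1 := ⟨hz.1, lt_trans hz.2 h1⟩
      rw [(key z hz').deriv]
      have h2 : 0 < 1 - z^2 := by nlinarith [hz'.1, hz'.2]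
      have hzp : 0 < z := hz'.1
      apply div_pos (by nlinarith [pow_pos hzp 4]) (by positivity)
  have h0y : (0:ℝ) ∈ Set.Icc (0:ℝ) y := by constructor <;> linarith
  have hyy : y ∈ Set.Icc (0:ℝ) y := by constructor <;> linarith
  have := hmono h0y hyy h0
  simp only [hf] at this
  have h2 : 0 < 1 - y^2 := by nlinarith
  simp only [Real.log_one, ne_eq, OfNat.ofNat_ne_zero, not_false_eq_true, zero_pow, mul_zero,
    sub_zero, zero_div, mul_one, add_zero, zero_add, sub_self, zero_sub] at this
  nlinarith [this]

noncomputable def sg (t : ℝ) : ℝ := (t + 1/2) * (Real.log (t+1) - Real.log t) - 1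

noncomputable def snu (t : ℝ) : ℝ :=
  Real.log (Real.Gamma (t+1)) - ((t + 1/2) * Real.log t - t + (1/2) * Real.log (2*Real.pi))

lemma log_diff_eq (t : ℝ) (ht : 0 < t) :
    Real.log (t+1) - Real.log t
      = Real.log (1+1/(2*t+1)) - Real.log (1-1/(2*t+1)) := by
  have h1 : (1:ℝ) + 1/(2*t+1) = (2*(t+1))/(2*t+1) := by field_simp; ring
  have h2 : (1:ℝ) - 1/(2*t+1) = (2*t)/(2*t+1) := by field_simp; ring
  rw [h1, h2, Real.log_div (by positivity) (by positivity),
    Real.log_div (by positivity) (by positivity),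
    Real.log_mul (by norm_num) (by positivity), Real.log_mul (by norm_num) (by positivity)]
  ring

lemma sg_lt (t : ℝ) (ht : 1 ≤ t) : sg t < 1/(12*t) - 1/(12*(t+1)) := by
  have ht0 : (0:ℝ) < t := by linarith
  set y : ℝ := 1/(2*t+1) with hy
  have h0 : 0 < y := by positivity
  have h1 : y < 1 := by rw [hy]; rw [div_lt_one (by linarith)]; linarith
  have hL : Real.log (t+1) - Real.log t < 2*y + 2*y^3/(3*(1-y^2)) := by
    rw [log_diff_eq t ht0]; exact log_ratio_upper h0 h1
  have hpos : (0:ℝ) < t + 1/2 := by linarith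
  have key : sg t < (t+1/2) * (2*y + 2*y^3/(3*(1-y^2))) - 1 := by
    unfold sg
    have := mul_lt_mul_of_pos_left hL hpos
    linarith
  have heq : (t+1/2) * (2*y + 2*y^3/(3*(1-y^2))) - 1 = 1/(12*t) - 1/(12*(t+1)) := by
    rw [hy]
    have ha : (2*t+1) ≠ 0 := by positivity
    have hb : (1:ℝ) - (1/(2*t+1))^2 = (4*t^2+4*t)/(2*t+1)^2 := by field_simp; ring
    rw [hb]
    field_simp
    ring
  linarith [key, heq.le]

lemma sg_gt (t : ℝ) (ht : 1 ≤ t) : 1/(12*t+1) - 1/(12*(t+1)+1) < sg t := by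
  have ht0 : (0:ℝ) < t := by linarith
  set y : ℝ := 1/(2*t+1) with hy
  have h0 : 0 < y := by positivity
  have h1 : y < 1 := by rw [hy]; rw [div_lt_one (by linarith)]; linarith
  have hL : 2*y + 2/3*y^3 < Real.log (t+1) - Real.log t := by
    rw [log_diff_eq t ht0]; exact log_ratio_lower h0 h1
  have hpos : (0:ℝ) < t + 1/2 := by linarith
  have key : (t+1/2) * (2*y + 2/3*y^3) - 1 < sg t := by
    unfold sg
    have := mul_lt_mul_of_pos_left hL hpos
    linarith
  have heq : (t+1/2) * (2*y + 2/3*y^3) - 1 = 1/(3*(2*t+1)^2) := by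
    rw [hy]; field_simp; ring
  have hineq : 1/(12*t+1) - 1/(12*(t+1)+1) < 1/(3*(2*t+1)^2) := by
    have d1 : (0:ℝ) < 12*t+1 := by linarith
    have d2 : (0:ℝ) < 12*(t+1)+1 := by linarith
    have d3 : (0:ℝ) < 3*(2*t+1)^2 := by positivity
    rw [div_sub_div _ _ d1.ne' d2.ne', div_lt_div_iff₀ (by positivity) d3]
    nlinarith
  linarith [key, heq]

lemma snu_rec (t : ℝ) (ht : 0 < t) : snu t = sg t + snu (t+1) := by
  have hG : Real.Gamma (t+1+1) = (t+1) * Real.Gamma (t+1) := Real.Gamma_add_one (by positivity)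
  have hGpos : 0 < Real.Gamma (t+1) := Real.Gamma_pos_of_pos (by positivity)
  unfold snu sg
  rw [hG, Real.log_mul (by positivity) hGpos.ne']
  ring

lemma snu_nat (n : ℕ) (hn : 1 ≤ n) :
    snu n = Real.log (Stirling.stirlingSeq n) - (1/2) * Real.log Real.pi := by
  have hn0 : (0:ℝ) < n := by exact_mod_cast hn
  have hfact : Real.Gamma ((n:ℝ)+1) = (Nat.factorial n : ℝ) := Real.Gamma_nat_eq_factorial n
  rw [snu, hfact, Stirling.log_stirlingSeq_formula,
    Real.log_mul (by norm_num) hn0.ne', Real.log_mul (by norm_num) Real.pi_pos.ne',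
    Real.log_div hn0.ne' (Real.exp_pos 1).ne', Real.log_exp]
  ring

lemma snu_nat_tendsto : Tendsto (fun n : ℕ => snu n) atTop (𝓝 0) := by
  have h1 : Tendsto (fun n : ℕ => Real.log (Stirling.stirlingSeq n) - (1/2) * Real.log Real.pi)
      atTop (𝓝 0) := by
    have hs : Tendsto (fun n : ℕ => Real.log (Stirling.stirlingSeq n)) atTop
        (𝓝 (Real.log (Real.sqrt Real.pi))) :=
      ((Real.continuousAt_log (by positivity)).tendsto).comp Stirling.tendsto_stirlingSeq_sqrt_pi
    have h2 := hs.sub (tendsto_const_nhds (x := (1/2) * Real.log Real.pi))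
    rw [Real.log_sqrt Real.pi_pos.le] at h2
    convert h2 using 2
    ring
  apply h1.congr'
  filter_upwards [eventually_ge_atTop 1] with n hn
  exact (snu_nat n hn).symm

lemma Gamma_m2 (m : ℕ) : Real.Gamma ((m:ℝ)+2) = ((m:ℝ)+1) * Real.Gamma ((m:ℝ)+1) := by
  have h := Real.Gamma_add_one (s := (m:ℝ)+1) (by positivity)
  rw [show ((m:ℝ)+1+1) = (m:ℝ)+2 by ring] at h
  exact h

lemma logGamma_interp_upper (m : ℕ) {t : ℝ} (ht0 : 0 ≤ t) (ht1 : t < 1) :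
    Real.log (Real.Gamma ((m:ℝ) + t + 1))
      ≤ Real.log (Nat.factorial m) + t * Real.log ((m:ℝ)+1) := by
  have ha : ((m:ℝ)+1) ∈ Set.Ioi (0:ℝ) := by simp only [Set.mem_Ioi]; positivity
  have hb : ((m:ℝ)+2) ∈ Set.Ioi (0:ℝ) := by simp only [Set.mem_Ioi]; positivity
  have hcv := Real.convexOn_log_Gamma.2 ha hb (by linarith : (0:ℝ) ≤ 1 - t) ht0 (by ring)
  have hpt : (1-t) • ((m:ℝ)+1) + t • ((m:ℝ)+2) = (m:ℝ) + t + 1 := by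
    simp only [smul_eq_mul]; ring
  rw [hpt] at hcv
  simp only [Function.comp_apply] at hcv
  rw [Gamma_m2 m, Real.Gamma_nat_eq_factorial,
    Real.log_mul (by positivity) (by positivity : (0:ℝ) < (Nat.factorial m : ℝ)).ne'] at hcv
  simp only [smul_eq_mul] at hcv
  nlinarith [hcv]

lemma logGamma_interp_lower (m : ℕ) (hm : 1 ≤ m) {t : ℝ} (ht0 : 0 ≤ t) (ht1 : t < 1) :
    Real.log (Nat.factorial m) + t * Real.log m
      ≤ Real.log (Real.Gamma ((m:ℝ) + t + 1)) := by
  have hm0 : (0:ℝ) < m := by exact_mod_cast hm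
  rcases eq_or_lt_of_le ht0 with h | h
  · rw [← h]
    rw [show ((m:ℝ) + 0 + 1) = (m:ℝ)+1 by ring, Real.Gamma_nat_eq_factorial]
    simp
  · have hsl := Real.convexOn_log_Gamma.slope_mono_adjacent
      (x := (m:ℝ)) (y := (m:ℝ)+1) (z := (m:ℝ)+t+1)
      (by simp only [Set.mem_Ioi]; positivity) (by simp only [Set.mem_Ioi]; positivity)
      (by linarith) (by linarith)
    simp only [Function.comp_apply] at hsl
    have hG1 : Real.Gamma ((m:ℝ)+1) = (Nat.factorial m : ℝ) := Real.Gamma_nat_eq_factorial m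
    have hG0 : Real.Gamma ((m:ℝ)+1) = (m:ℝ) * Real.Gamma m := Real.Gamma_add_one hm0.ne'
    have hGmpos : 0 < Real.Gamma (m:ℝ) := Real.Gamma_pos_of_pos hm0
    have hlog1 : Real.log (Real.Gamma ((m:ℝ)+1)) - Real.log (Real.Gamma (m:ℝ)) = Real.log m := by
      rw [hG0, Real.log_mul hm0.ne' hGmpos.ne']; ring
    rw [show ((m:ℝ)+1-(m:ℝ)) = 1 by ring, show ((m:ℝ)+t+1-((m:ℝ)+1)) = t by ring] at hsl
    rw [div_one] at hsl
    rw [hlog1, hG1, le_div_iff₀ h] at hsl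
    linarith

lemma aux_tendsto (t : ℝ) (ht : 0 ≤ t) :
    Tendsto (fun s : ℝ => (s + t + 1/2) * Real.log (1 + t/s)) atTop (𝓝 t) := by
  have h1 : Tendsto (fun s : ℝ => s * Real.log (1 + t/s)) atTop (𝓝 t) :=
    Real.tendsto_mul_log_one_add_div_atTop t
  have h2 : Tendsto (fun s : ℝ => Real.log (1 + t/s)) atTop (𝓝 0) := by
    have : Tendsto (fun s : ℝ => 1 + t/s) atTop (𝓝 1) := by
      have := (tendsto_const_nhds (x := t) (f := atTop)).div_atTop tendsto_id
      simpa using (tendsto_const_nhds (x := (1:ℝ))).add this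
    have hc := (Real.continuousAt_log one_ne_zero).tendsto.comp this
    simpa [Function.comp_def] using hc
  have h3 := h1.add (h2.const_mul (t + 1/2))
  have h4 : Tendsto (fun s : ℝ => s * Real.log (1 + t/s) + (t+1/2) * Real.log (1 + t/s))
      atTop (𝓝 t) := by simpa using h3
  apply h4.congr
  intro s; ring

lemma log_aux_tendsto (t : ℝ) :
    Tendsto (fun s : ℝ => t * Real.log (1 + 1/s)) atTop (𝓝 0) := by
  have h2 : Tendsto (fun s : ℝ => Real.log (1 + 1/s)) atTop (𝓝 0) := by
    have : Tendsto (fun s : ℝ => 1 + 1/s) atTop (𝓝 1) := by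
      have := (tendsto_const_nhds (x := (1:ℝ)) (f := atTop)).div_atTop tendsto_id
      simpa using (tendsto_const_nhds (x := (1:ℝ))).add this
    have hc := (Real.continuousAt_log one_ne_zero).tendsto.comp this
    simpa [Function.comp_def] using hc
  simpa using h2.const_mul t

lemma snu_sandwich (m : ℕ) (hm : 1 ≤ m) {t : ℝ} (ht0 : 0 ≤ t) (ht1 : t < 1) :
    snu (m:ℝ) + (-((m:ℝ) + t + 1/2) * Real.log (1 + t/(m:ℝ)) + t) ≤ snu ((m:ℝ) + t)
    ∧ snu ((m:ℝ) + t) ≤ snu (m:ℝ)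
        + (t * Real.log (1 + 1/(m:ℝ)) - ((m:ℝ) + t + 1/2) * Real.log (1 + t/(m:ℝ)) + t) := by
  have hmr1 : (1:ℝ) ≤ (m:ℝ) := by exact_mod_cast hm
  have hmr0 : (0:ℝ) < (m:ℝ) := by linarith
  have e1 : Real.log ((m:ℝ) + t) = Real.log (m:ℝ) + Real.log (1 + t/(m:ℝ)) := by
    rw [← Real.log_mul hmr0.ne' (by positivity : (1 + t/(m:ℝ)) ≠ 0)]
    congr 1; field_simp
  have e2 : Real.log ((m:ℝ) + 1) = Real.log (m:ℝ) + Real.log (1 + 1/(m:ℝ)) := by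
    rw [← Real.log_mul hmr0.ne' (by positivity : (1 + 1/(m:ℝ)) ≠ 0)]
    congr 1; field_simp
  have hup := logGamma_interp_upper m ht0 ht1
  have hlo := logGamma_interp_lower m hm ht0 ht1
  rw [e2] at hup
  generalize hG : Real.log (Real.Gamma ((m:ℝ) + t + 1)) = G at hup hlo
  constructor
  · simp only [snu, Real.Gamma_nat_eq_factorial]
    rw [e1, hG]
    ring_nf
    ring_nf at hlo
    linarith [hlo]
  · simp only [snu, Real.Gamma_nat_eq_factorial]
    rw [e1, hG]
    ring_nf
    ring_nf at hup
    linarith [hup]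

lemma snu_shift_tendsto (x : ℝ) (hx : 1 ≤ x) :
    Tendsto (fun N : ℕ => snu (x + N)) atTop (𝓝 0) := by
  set m₀ : ℕ := ⌊x⌋₊ with hm₀
  set t : ℝ := x - m₀ with ht
  have hm₀1 : 1 ≤ m₀ := (Nat.one_le_floor_iff x).mpr hx
  have ht0 : 0 ≤ t := by
    have := Nat.floor_le (by linarith : (0:ℝ) ≤ x)
    simp only [ht]; linarith
  have ht1 : t < 1 := by
    have := Nat.lt_floor_add_one x
    simp only [ht]; linarith
  -- cast sequence
  have hnat : Tendsto (fun N : ℕ => m₀ + N) atTop atTop := by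
    simpa [Nat.add_comm] using tendsto_add_atTop_nat m₀
  have hc : Tendsto (fun N : ℕ => ((m₀ + N : ℕ) : ℝ)) atTop atTop :=
    tendsto_natCast_atTop_atTop.comp hnat
  -- snu at integer shifts
  have hsnuInt : Tendsto (fun N : ℕ => snu ((m₀ + N : ℕ) : ℝ)) atTop (𝓝 0) :=
    snu_nat_tendsto.comp hnat
  -- bounding sequences
  set rA : ℕ → ℝ := fun N => t * Real.log (1 + 1/((m₀+N:ℕ):ℝ))
      - (((m₀+N:ℕ):ℝ) + t + 1/2) * Real.log (1 + t/((m₀+N:ℕ):ℝ)) + t with hrA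
  set rB : ℕ → ℝ := fun N =>
      - ((((m₀+N:ℕ):ℝ)) + t + 1/2) * Real.log (1 + t/((m₀+N:ℕ):ℝ)) + t with hrB
  have hrAlim : Tendsto rA atTop (𝓝 0) := by
    have h1 := (log_aux_tendsto t).comp hc
    have h2 := (aux_tendsto t ht0).comp hc
    have hlim := (h1.sub h2).add (tendsto_const_nhds (x := t) (f := atTop))
    rw [show (0:ℝ) - t + t = 0 by ring] at hlim
    exact hlim.congr (fun N => by simp only [Function.comp_apply, hrA])
  have hrBlim : Tendsto rB atTop (𝓝 0) := by
    have h2 := (aux_tendsto t ht0).comp hc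
    have hlim := (h2.neg).add (tendsto_const_nhds (x := t) (f := atTop))
    rw [show -t + t = 0 by ring] at hlim
    exact hlim.congr (fun N => by simp only [Function.comp_apply, hrB, neg_mul])
  -- key sandwich inequalities
  have key : ∀ N : ℕ, snu ((m₀+N:ℕ):ℝ) + rB N ≤ snu (x + N)
      ∧ snu (x + N) ≤ snu ((m₀+N:ℕ):ℝ) + rA N := by
    intro N
    have hxN : x + (N:ℝ) = ((m₀+N:ℕ):ℝ) + t := by push_cast; simp only [ht]; ring
    rw [hxN]
    exact snu_sandwich (m₀+N) (by omega) ht0 ht1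
  exact tendsto_of_tendsto_of_tendsto_of_le_of_le
    (by simpa using hsnuInt.add hrBlim) (by simpa using hsnuInt.add hrAlim)
    (fun N => (key N).1) (fun N => (key N).2)

lemma snu_partial (x : ℝ) (hx : 1 ≤ x) (N : ℕ) :
    snu x = (∑ n ∈ Finset.range N, sg (x + n)) + snu (x + N) := by
  induction N with
  | zero => simp
  | succ N ih =>
    rw [Finset.sum_range_succ, ih, snu_rec (x + N) (by positivity)]
    have : x + (N:ℝ) + 1 = x + ((N:ℕ)+1 : ℕ) := by push_cast; ring
    rw [this]
    ring

lemma snu_partial_tendsto (x : ℝ) (hx : 1 ≤ x) :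
    Tendsto (fun N : ℕ => ∑ n ∈ Finset.range N, sg (x + n)) atTop (𝓝 (snu x)) := by
  have h := (tendsto_const_nhds (x := snu x) (f := atTop)).sub (snu_shift_tendsto x hx)
  rw [sub_zero] at h
  apply h.congr
  intro N
  rw [snu_partial x hx N]
  ring

lemma snu_le (x : ℝ) (hx : 1 ≤ x) : snu x ≤ 1/(12*x) := by
  apply le_of_tendsto (snu_partial_tendsto x hx)
  filter_upwards with N
  have h1 : ∑ n ∈ Finset.range N, sg (x + n)
      ≤ ∑ n ∈ Finset.range N, (1/(12*(x+n)) - 1/(12*(x+(n+1:ℕ)))) := by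
    apply Finset.sum_le_sum
    intro n _
    have := sg_lt (x + n) (by have : (0:ℝ) ≤ n := Nat.cast_nonneg n; linarith)
    push_cast
    push_cast at this
    rw [show x + ((n:ℝ)+1) = x + (n:ℝ) + 1 by ring]
    linarith
  rw [Finset.sum_range_sub' (f := fun n : ℕ => 1/(12*(x+(n:ℝ))))] at h1
  have h2 : (0:ℝ) < 12*(x+(N:ℝ)) := by have : (0:ℝ) ≤ N := Nat.cast_nonneg N; linarith
  have h3 : (0:ℝ) < 1/(12*(x+(N:ℝ))) := by positivity
  simp only [Nat.cast_zero, add_zero] at h1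
  linarith

lemma snu_ge (x : ℝ) (hx : 1 ≤ x) : 1/(12*x+1) ≤ snu x := by
  have hlim : Tendsto (fun N : ℕ => 1/(12*x+1) - 1/(12*(x+(N:ℝ))+1)) atTop
      (𝓝 (1/(12*x+1))) := by
    have hd : Tendsto (fun N : ℕ => 12*(x+(N:ℝ))+1) atTop atTop := by
      apply tendsto_atTop_add_const_right
      apply Tendsto.const_mul_atTop (by norm_num : (0:ℝ) < 12)
      exact tendsto_atTop_add_const_left _ _ tendsto_natCast_atTop_atTop
    have := hd.inv_tendsto_atTop
    have h2 := (tendsto_const_nhds (x := 1/(12*x+1)) (f := atTop)).sub this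
    rw [sub_zero] at h2
    apply h2.congr
    intro N; simp [one_div]
  apply le_of_tendsto_of_tendsto' hlim (snu_partial_tendsto x hx)
  intro N
  have h1 : ∑ n ∈ Finset.range N, (1/(12*(x+(n:ℝ))+1) - 1/(12*(x+((n:ℕ)+1:ℕ):ℝ)+1))
      ≤ ∑ n ∈ Finset.range N, sg (x + n) := by
    apply Finset.sum_le_sum
    intro n _
    have := sg_gt (x + n) (by have : (0:ℝ) ≤ n := Nat.cast_nonneg n; linarith)
    push_cast
    push_cast at this
    rw [show x + ((n:ℝ)+1) = x + (n:ℝ) + 1 by ring]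
    linarith
  rw [Finset.sum_range_sub' (f := fun n : ℕ => 1/(12*(x+(n:ℝ))+1))] at h1
  simp only [Nat.cast_zero, add_zero] at h1
  linarith

/-- Effective Stirling formula: for real `x ≥ 1`,
`Γ(x+1) = √(2πx)·(x/e)^x·e^{λ_x}` with `1/(12x+1) < λ_x < 1/(12x)`. -/
theorem stirling_effective (x : ℝ) (hx : 1 ≤ x) :
    ∃ l : ℝ, 1 / (12 * x + 1) < l ∧ l < 1 / (12 * x) ∧
      Real.Gamma (x + 1) = Real.sqrt (2 * π * x) * (x / Real.exp 1) ^ x * Real.exp l := by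
  have hx0 : (0:ℝ) < x := by linarith
  refine ⟨snu x, ?_, ?_, ?_⟩
  · have h1 := sg_gt x hx
    have h2 := snu_ge (x+1) (by linarith)
    have h3 := snu_rec x hx0
    have he : 1/(12*x+1) - 1/(12*(x+1)+1) + 1/(12*(x+1)+1) = 1/(12*x+1) := by ring
    linarith
  · have h1 := sg_lt x hx
    have h2 := snu_le (x+1) (by linarith)
    have h3 := snu_rec x hx0
    linarith
  · have hG : 0 < Real.Gamma (x+1) := Real.Gamma_pos_of_pos (by linarith)
    have hlogG : Real.log (Real.Gamma (x+1))
        = (x + 1/2) * Real.log x - x + (1/2) * Real.log (2*π) + snu x := by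
      rw [snu]; ring
    have h1 : Real.sqrt (2*π*x) = Real.exp ((1/2) * (Real.log (2*π) + Real.log x)) := by
      rw [← Real.log_mul (by positivity) hx0.ne']
      rw [← Real.exp_log (Real.sqrt_pos.mpr (by positivity : (0:ℝ) < 2*π*x))]
      congr 1
      rw [Real.log_sqrt (by positivity)]
      ring
    have h2 : (x / Real.exp 1) ^ x = Real.exp (x * (Real.log x - 1)) := by
      rw [Real.rpow_def_of_pos (by positivity)]
      rw [Real.log_div hx0.ne' (Real.exp_pos 1).ne', Real.log_exp]
      ring_nf
    rw [← Real.exp_log hG, hlogG, h1, h2, ← Real.exp_add, ← Real.exp_add]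
    congr 1
    ring
end
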